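/- Let (e_j, f_j), j = 1, …, n, be pairwise orthogonal hyperbolic pairs, and set Σ₂ₙ := i^n * ∏_{j=1}^n (1 − ι e_j * ι f_j). Then Σ₂ₙ is an element of the Pin group pinGroup Q of the Clifford algebra (it is unitary and lies in the Lipschitz group, being equal to (−1)^n times the product of the 2n unit vectors ι v_j * ι w_j with v_j = (e_j + f_j)/√2 and w_j = −i(e_j − f_j)/√2). -/

import Mathlib

open CliffordAlgebra QuadraticMap

private lemma ι_mem_pin_of_neg_one {V : Type*} [AddCommGroup V] [Module ℂ V]
    (Q : QuadraticForm ℂ V) (m : V) (hm : Q m = -1) : ι Q m ∈ pinGroup Q := by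
  have hsq : ι Q m * ι Q m = -1 := by
    rw [ι_sq_scalar, hm, _root_.map_neg, map_one]
  refine ⟨⟨⟨ι Q m, -ι Q m, by rw [mul_neg, hsq, neg_neg], by rw [neg_mul, hsq, neg_neg]⟩,
    Subgroup.subset_closure ⟨m, rfl⟩, rfl⟩, ?_, ?_⟩
  · rw [star_ι, neg_mul, hsq, neg_neg]
  · rw [star_ι, mul_neg, hsq, neg_neg]

private lemma factor_mem_pin {V : Type*} [AddCommGroup V] [Module ℂ V]
    (Q : QuadraticForm ℂ V) (a b : V) (hQa : Q a = 0) (hQb : Q b = 0)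
    (hab : polar Q a b = 2) :
    Complex.I • (1 - ι Q a * ι Q b) ∈ pinGroup Q := by
  set c : ℂ := ((Real.sqrt 2 : ℝ) : ℂ)⁻¹ with hc
  have hc2 : c * c = 2⁻¹ := by
    rw [hc, ← mul_inv, ← Complex.ofReal_mul, Real.mul_self_sqrt (by norm_num)]
    norm_num
  have hQab : Q (a + b) = 2 := by
    rw [show Q (a + b) = polar Q a b + Q a + Q b by rw [polar]; ring, hab, hQa, hQb]; ring
  have hQab' : Q (a - b) = -2 := by
    rw [show Q (a - b) = polar Q a (-b) + Q a + Q (-b) by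
        rw [polar]; simp [sub_eq_add_neg]; ring,
      polar_neg_right, hab, hQa, QuadraticMap.map_neg, hQb]
    ring
  set v : V := (Complex.I * c) • (a + b) with hv
  set w : V := c • (a - b) with hw
  have hQv : Q v = -1 := by
    rw [hv, QuadraticMap.map_smul, hQab]
    rw [show Complex.I * c * (Complex.I * c) = (Complex.I * Complex.I) * (c * c) by ring,
      Complex.I_mul_I, hc2]
    norm_num
  have hQw : Q w = -1 := by
    rw [hw, QuadraticMap.map_smul, hQab', hc2]
    norm_num
  have hswap : ι Q b * ι Q a = algebraMap ℂ _ (polar Q a b) - ι Q a * ι Q b := by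
    rw [← ι_mul_ι_add_swap]; noncomm_ring
  have hexp : (ι Q a + ι Q b) * (ι Q a - ι Q b) = (2 : ℂ) • (1 - ι Q a * ι Q b) := by
    have h2 : ((2 : ℂ) • (1 - ι Q a * ι Q b) : CliffordAlgebra Q)
        = 2 - 2 * (ι Q a * ι Q b) := by
      rw [smul_sub, Algebra.smul_def, Algebra.smul_def, mul_one, map_ofNat]
    rw [h2, mul_sub, add_mul, add_mul, ι_sq_scalar, ι_sq_scalar, hQa, hQb, hswap, hab,
      map_zero, map_ofNat]
    noncomm_ring
  have hkey : ι Q v * ι Q w = Complex.I • (1 - ι Q a * ι Q b) := by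
    rw [hv, hw, _root_.map_smul, _root_.map_smul, smul_mul_smul_comm, map_add, _root_.map_sub, hexp, smul_smul]
    congr 1
    rw [show Complex.I * c * c = Complex.I * (c * c) by ring, hc2]
    ring
  rw [← hkey]
  exact mul_mem (ι_mem_pin_of_neg_one Q v hQv) (ι_mem_pin_of_neg_one Q w hQw)

private lemma smul_ofFn_prod {A : Type*} [Ring A] [Algebra ℂ A] :
    ∀ (n : ℕ) (g : Fin n → A),
      (Complex.I ^ n) • (List.ofFn g).prod = (List.ofFn fun j => Complex.I • g j).prod := by
  intro n
  induction n with
  | zero => intro g; simp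
  | succ n ih =>
    intro g
    rw [List.ofFn_succ, List.ofFn_succ, List.prod_cons, List.prod_cons, pow_succ',
      ← smul_mul_smul_comm, ih]

/-- Let `(e j, f j)`, `j = 1, …, n`, be pairwise orthogonal hyperbolic pairs and
`Σ₂ₙ = i^n • ∏ j (1 - ι (e j) * ι (f j))`.  Then `Σ₂ₙ` belongs to the Pin group. -/
theorem sigma_even_mem_pinGroup {V : Type*} [AddCommGroup V] [Module ℂ V]
    (Q : QuadraticForm ℂ V) (n : ℕ) (e f : Fin n → V)
    (hQe : ∀ j, Q (e j) = 0) (hQf : ∀ j, Q (f j) = 0)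
    (hef : ∀ j, polar Q (e j) (f j) = 2)
    (horth : ∀ i j, i ≠ j →
      polar Q (e i) (e j) = 0 ∧ polar Q (e i) (f j) = 0 ∧ polar Q (f i) (f j) = 0)
    (S : CliffordAlgebra Q)
    (hS : S = (Complex.I ^ n) •
      (List.ofFn (fun j : Fin n => 1 - ι Q (e j) * ι Q (f j))).prod) :
    S ∈ pinGroup Q := by
  rw [hS, smul_ofFn_prod]
  refine Submonoid.list_prod_mem _ ?_
  intro x hx
  obtain ⟨j, rfl⟩ := List.mem_ofFn.mp hx
  exact factor_mem_pin Q (e j) (f j) (hQe j) (hQf j) (hef j)
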